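/- Let B and A be directed algebras and Λ = 𝒜(B, A^op). Let i, j and ℓ be pairwise distinct vertices and k ≥ 1. Then the Yoneda multiplication m_2 : Ext^k_Λ(Δ_Λ(j), Δ_Λ(ℓ)) × Hom_Λ(Δ_Λ(i), Δ_Λ(j)) → Ext^k_Λ(Δ_Λ(i), Δ_Λ(ℓ)) is the zero map. -/

import Mathlib

noncomputable section

universe u

/-- Data of a complete set of orthogonal idempotents indexed by the vertices `Fin n`
of a quiver, inside a `K`-algebra. -/
structure IdemData (K : Type u) [Field K] (n : ℕ) (B : Type u) [Ring B] [Algebra K B] where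
  e : Fin n → B
  orth : ∀ i j, e i * e j = if i = j then e i else 0
  complete : ∑ i, e i = 1

namespace IdemData

variable {K : Type u} [Field K] {n : ℕ} {B : Type u} [Ring B] [Algebra K B]

/-- Membership in the radical of a directed algebra: all "diagonal components" vanish.
For a directed (triangular, basic) algebra this is exactly the Jacobson radical. -/
def IsRad (d : IdemData K n B) (b : B) : Prop := ∀ i, d.e i * b * d.e i = 0

/-- A directed algebra: finite dimensional, basic, whose (Gabriel) quiver is acyclic with all
arrows `i ⟶ j` satisfying `i < j`.  Equivalently: `e j * B * e i = 0` for `j < i` and the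
"diagonal" components `e i * B * e i` are one-dimensional. -/
def Directed (d : IdemData K n B) : Prop :=
  FiniteDimensional K B ∧
  (∀ i j : Fin n, j < i → ∀ b : B, d.e j * b * d.e i = 0) ∧
  (∀ i : Fin n, ∀ b : B, ∃ c : K, d.e i * b * d.e i = c • d.e i)

/-- The opposite of a directed algebra (all arrows decrease); `A^op` for `A` directed. -/
def Codirected (d : IdemData K n B) : Prop :=
  FiniteDimensional K B ∧
  (∀ i j : Fin n, i < j → ∀ b : B, d.e j * b * d.e i = 0) ∧
  (∀ i : Fin n, ∀ b : B, ∃ c : K, d.e i * b * d.e i = c • d.e i)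

/-- The indecomposable projective left module `P(i) = B·e i`, realized as the left ideal
`{x | x * e i = x}`. -/
def proj (d : IdemData K n B) (i : Fin n) : Submodule B B where
  carrier := {x | x * d.e i = x}
  add_mem' := by
    intro a b ha hb
    simp only [Set.mem_setOf_eq] at *
    rw [add_mul, ha, hb]
  zero_mem' := by simp
  smul_mem' := by
    intro c x hx
    simp only [Set.mem_setOf_eq, smul_eq_mul] at *
    rw [mul_assoc, hx]

end IdemData

/-- The bilinear "multiplication" map `C ⊗ B → Λ`, `(c, b) ↦ ιC c * ιB b`. -/
def dualBil {K : Type u} [Field K] {B C L : Type u} [Ring B] [Algebra K B] [Ring C] [Algebra K C]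
    [Ring L] [Algebra K L] (ιB : B →ₐ[K] L) (ιC : C →ₐ[K] L) : C →ₗ[K] B →ₗ[K] L :=
  LinearMap.mk₂ K (fun c b => ιC c * ιB b)
    (fun c c' b => by simp only [map_add, add_mul])
    (fun k c b => by simp only [map_smul, smul_mul_assoc])
    (fun c b b' => by simp only [map_add, mul_add])
    (fun k c b => by simp only [map_smul, mul_smul_comm])

/-- `Λ` is the dual extension algebra `𝒜(B, C)` of `B` and `C` (in the paper `C = A^op`):
`B` and `C` embed as subalgebras, sharing the idempotents; the product of a radical element of
`B` with a radical element of `C` (in this order; i.e. all paths `α β'`) vanishes; and the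
products `ιC c * ιB b` span `Λ`, the only linear relations among them being the ones forced by
`ιC (c e_i) * ιB (e_j b) = 0` for `i ≠ j`.  This encodes `Λ ≅ ⊕_i C e_i ⊗ e_i B` as in
`Definition 2.1` of the paper. -/
structure DualExt (K : Type u) [Field K] (n : ℕ) (B C L : Type u) [Ring B] [Algebra K B]
    [Ring C] [Algebra K C] [Ring L] [Algebra K L]
    (dB : IdemData K n B) (dC : IdemData K n C) where
  ιB : B →ₐ[K] L
  ιC : C →ₐ[K] L
  injB : Function.Injective ιB
  injC : Function.Injective ιC
  idem : ∀ i, ιB (dB.e i) = ιC (dC.e i)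
  radMul : ∀ b c, dB.IsRad b → dC.IsRad c → ιB b * ιC c = 0
  spans : Submodule.span K {x : L | ∃ c b, x = ιC c * ιB b} = ⊤
  mulKer : LinearMap.ker (TensorProduct.lift (dualBil ιB ιC)) =
    Submodule.span K {x : TensorProduct K C B |
      ∃ i j : Fin n, i ≠ j ∧ ∃ c b, x = (c * dC.e i) ⊗ₜ[K] (dB.e j * b)}

/-- The left ideal `{x | x * a = x}`; for an idempotent `a = e i` this is the
indecomposable projective module `P(i) = B e i`. -/
def leftIdeal {L : Type u} [Ring L] (a : L) : Submodule L L where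
  carrier := {x | x * a = x}
  add_mem' := by
    intro x y hx hy
    simp only [Set.mem_setOf_eq] at *
    rw [add_mul, hx, hy]
  zero_mem' := by simp
  smul_mem' := by
    intro c x hx
    simp only [Set.mem_setOf_eq, smul_eq_mul] at *
    rw [mul_assoc, hx]
/-- A projective resolution `⋯ → P 1 → P 0 → M → 0` of the module `M` over `R`. -/
structure ProjRes (K : Type u) [Field K] (R : Type u) [Ring R] [Algebra K R]
    (M : Type u) [AddCommGroup M] [Module R M] where
  P : ℕ → Type u
  [acg : ∀ k, AddCommGroup (P k)]
  [mod : ∀ k, Module R (P k)]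
  d : ∀ k, P (k + 1) →ₗ[R] P k
  aug : P 0 →ₗ[R] M
  proj : ∀ k, Module.Projective R (P k)
  aug_surj : Function.Surjective aug
  exact0 : LinearMap.ker aug = LinearMap.range (d 0)
  exact : ∀ k, LinearMap.ker (d k) = LinearMap.range (d (k + 1))

attribute [instance] ProjRes.acg ProjRes.mod

/-- Minimality of a projective resolution: the differentials are radical maps,
`im (d k) ⊆ rad R · P k` (the radical being described by the idempotent data). -/
def ProjRes.Minimal {K : Type u} [Field K] {R : Type u} [Ring R] [Algebra K R]
    {M : Type u} [AddCommGroup M] [Module R M] {n : ℕ}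
    (dd : IdemData K n R) (Q : ProjRes K R M) : Prop :=
  ∀ k, LinearMap.range (Q.d k) ≤
    Submodule.span R {x : Q.P k | ∃ b m, dd.IsRad b ∧ x = b • m}

/-- `S` is (a copy of) the simple module `L(i)` at the vertex `i`: it is simple and the
idempotent `e i` acts as the identity on it. -/
def IdemData.IsSimpleAt {K : Type u} [Field K] {n : ℕ} {B : Type u} [Ring B] [Algebra K B]
    (d : IdemData K n B) (i : Fin n) (S : Type u) [AddCommGroup S] [Module B S] : Prop :=
  IsSimpleModule B S ∧ ∀ s : S, d.e i • s = s

/-- The standard module `Δ_Λ(i) = Λe_i / Λ·(rad B)·e_i` of the dual extension algebra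
(the quotient of the indecomposable projective `P_Λ(i)` by the span of the images of all
maps from `P_Λ(j)`, `j > i`, equivalently by `Λ·(rad B)·e i`). -/
def DualExt.std {K : Type u} [Field K] {n : ℕ} {B C L : Type u} [Ring B] [Algebra K B]
    [Ring C] [Algebra K C] [Ring L] [Algebra K L] {dB : IdemData K n B} {dC : IdemData K n C}
    (D : DualExt K n B C L dB dC) (i : Fin n) : Type u :=
  ↥(leftIdeal (D.ιB (dB.e i))) ⧸
    ((Submodule.span L {x : L | ∃ b, dB.IsRad b ∧ x = D.ιB b * D.ιB (dB.e i)}).comap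
      (leftIdeal (D.ιB (dB.e i))).subtype)

noncomputable instance {K : Type u} [Field K] {n : ℕ} {B C L : Type u} [Ring B] [Algebra K B]
    [Ring C] [Algebra K C] [Ring L] [Algebra K L] {dB : IdemData K n B} {dC : IdemData K n C}
    (D : DualExt K n B C L dB dC) (i : Fin n) : AddCommGroup (D.std i) :=
  by unfold DualExt.std; infer_instance

noncomputable instance {K : Type u} [Field K] {n : ℕ} {B C L : Type u} [Ring B] [Algebra K B]
    [Ring C] [Algebra K C] [Ring L] [Algebra K L] {dB : IdemData K n B} {dC : IdemData K n C}
    (D : DualExt K n B C L dB dC) (i : Fin n) : Module L (D.std i) :=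
  by unfold DualExt.std; infer_instance

section stdInstances

variable {K : Type u} [Field K] {n : ℕ} {B C L : Type u} [Ring B] [Algebra K B]
  [Ring C] [Algebra K C] [Ring L] [Algebra K L] {dB : IdemData K n B} {dC : IdemData K n C}

noncomputable instance (D : DualExt K n B C L dB dC) (i : Fin n) : Module K (D.std i) :=
  Module.compHom _ (algebraMap K L)

instance (D : DualExt K n B C L dB dC) (i : Fin n) : SMulCommClass L K (D.std i) := by
  constructor
  intro l k x
  show l • (algebraMap K L k • x) = algebraMap K L k • (l • x)
  rw [← mul_smul, ← mul_smul, Algebra.commutes]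

instance (D : DualExt K n B C L dB dC) (i : Fin n) : IsScalarTower K L (D.std i) := by
  constructor
  intro k l x
  show (k • l) • x = algebraMap K L k • l • x
  rw [← mul_smul, Algebra.smul_def]

end stdInstances


section HomologicalAux

lemma lift_of_range_le {R : Type u} [Ring R] {P M N : Type u} [AddCommGroup P] [Module R P]
    [AddCommGroup M] [Module R M] [AddCommGroup N] [Module R N]
    (hP : Module.Projective R P) (φ : P →ₗ[R] M) (ψ : N →ₗ[R] M)
    (hle : LinearMap.range φ ≤ LinearMap.range ψ) :
    ∃ χ : P →ₗ[R] N, ψ.comp χ = φ := by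
  haveI := hP
  obtain ⟨χ, hχ⟩ := Module.projective_lifting_property ψ.rangeRestrict
    (φ.codRestrict (LinearMap.range ψ) fun x => hle ⟨x, rfl⟩)
    (LinearMap.surjective_rangeRestrict ψ)
  refine ⟨χ, ?_⟩
  ext x
  have h := congrArg Subtype.val (LinearMap.congr_fun hχ x)
  simpa using h

lemma nullHomotopy {K : Type u} [Field K] {R : Type u} [Ring R] [Algebra K R]
    {M N : Type u} [AddCommGroup M] [Module R M] [AddCommGroup N] [Module R N]
    (Ri : ProjRes K R M) (Rj : ProjRes K R N)
    (G : ∀ t, Ri.P t →ₗ[R] Rj.P t)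
    (hG0 : Rj.aug.comp (G 0) = 0)
    (hGc : ∀ t, (G t).comp (Ri.d t) = (Rj.d t).comp (G (t + 1))) :
    ∃ h : ∀ t, Ri.P t →ₗ[R] Rj.P (t + 1),
      (Rj.d 0).comp (h 0) = G 0 ∧
      ∀ t, (Rj.d (t + 1)).comp (h (t + 1)) = G (t + 1) - (h t).comp (Ri.d t) := by
  have hdd : ∀ t, (Ri.d t).comp (Ri.d (t + 1)) = 0 := by
    intro t; ext x
    have hx : Ri.d (t + 1) x ∈ LinearMap.range (Ri.d (t + 1)) := ⟨x, rfl⟩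
    rw [← Ri.exact t] at hx
    simpa using hx
  have hran0 : LinearMap.range (G 0) ≤ LinearMap.range (Rj.d 0) := by
    rw [← Rj.exact0]
    rintro y ⟨x, rfl⟩
    exact LinearMap.congr_fun hG0 x
  obtain ⟨h0, hh0⟩ := lift_of_range_le (Ri.proj 0) (G 0) (Rj.d 0) hran0
  have hI0 : ((Rj.d 0).comp h0).comp (Ri.d 0) = (G 0).comp (Ri.d 0) := by rw [hh0]
  have stepEx : ∀ t (h : Ri.P t →ₗ[R] Rj.P (t + 1)),
      ((Rj.d t).comp h).comp (Ri.d t) = (G t).comp (Ri.d t) →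
      ∃ h' : Ri.P (t + 1) →ₗ[R] Rj.P (t + 2),
        (Rj.d (t + 1)).comp h' = G (t + 1) - h.comp (Ri.d t) := by
    intro t h hIt
    apply lift_of_range_le (Ri.proj (t + 1))
    rw [← Rj.exact t]
    rintro y ⟨x, rfl⟩
    rw [LinearMap.mem_ker]
    have e1 := LinearMap.congr_fun (hGc t) x
    have e2 := LinearMap.congr_fun hIt x
    simp only [LinearMap.comp_apply] at e1 e2
    simp only [LinearMap.sub_apply, LinearMap.comp_apply, map_sub]
    rw [e2, ← e1, sub_self]
  have Istep : ∀ t (h : Ri.P t →ₗ[R] Rj.P (t + 1)) (h' : Ri.P (t + 1) →ₗ[R] Rj.P (t + 2)),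
      ((Rj.d (t + 1)).comp h' = G (t + 1) - h.comp (Ri.d t)) →
      ((Rj.d (t + 1)).comp h').comp (Ri.d (t + 1)) = (G (t + 1)).comp (Ri.d (t + 1)) := by
    intro t h h' he
    rw [he, LinearMap.sub_comp, LinearMap.comp_assoc, hdd t, LinearMap.comp_zero, sub_zero]
  choose step hstep using stepEx
  let F : ∀ t, Σ' h : Ri.P t →ₗ[R] Rj.P (t + 1),
      ((Rj.d t).comp h).comp (Ri.d t) = (G t).comp (Ri.d t) :=
    fun t => Nat.rec ⟨h0, hI0⟩
      (fun t p => ⟨step t p.1 p.2, Istep t p.1 _ (hstep t p.1 p.2)⟩) t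
  exact ⟨fun t => (F t).1, hh0, fun t => hstep t (F t).1 (F t).2⟩

end HomologicalAux

/-- Proposition 4.1 of the paper.
Let `B` and `A` be directed algebras (with `C = A^op`), `Λ = 𝒜(B, A^op)` the dual extension
algebra, `i, j, ℓ` pairwise distinct vertices and `k ≥ 1` (below `k = k' + 1`).  Then the
Yoneda multiplication
`m₂ : Ext^k_Λ(Δ_Λ(j), Δ_Λ(ℓ)) × Hom_Λ(Δ_Λ(i), Δ_Λ(j)) → Ext^k_Λ(Δ_Λ(i), Δ_Λ(ℓ))`
is the zero map.  Concretely: the Yoneda product is computed via composition of chain maps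
between minimal projective resolutions, so the claim is that for every homomorphism
`f' : Δ_Λ(i) → Δ_Λ(j)`, with chain-map lift `g` to the minimal resolutions, and every
chain map `ε` of degree `k` from the resolution of `Δ_Λ(j)` to that of `Δ_Λ(ℓ)`
(representing an arbitrary class of `Ext^k_Λ(Δ_Λ(j), Δ_Λ(ℓ))`), the composite chain map
`t ↦ ε t ∘ g (k + t)` is null-homotopic, i.e. represents `0` in
`Ext^k_Λ(Δ_Λ(i), Δ_Λ(ℓ))`. -/
theorem statement2
    (K : Type) [Field K] [IsAlgClosed K] (n : ℕ)
    (B C L : Type) [Ring B] [Algebra K B] [Ring C] [Algebra K C] [Ring L] [Algebra K L]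
    (dB : IdemData K n B) (dC : IdemData K n C)
    (hB : dB.Directed) (hC : dC.Codirected)
    (D : DualExt K n B C L dB dC)
    (dL : IdemData K n L) (hdL : ∀ i, dL.e i = D.ιB (dB.e i))
    (i j l : Fin n) (hij : i ≠ j) (hjl : j ≠ l) (hil : i ≠ l)
    (k' : ℕ)
    -- minimal projective resolutions of `Δ_Λ(i)`, `Δ_Λ(j)`, `Δ_Λ(ℓ)`
    (Ri : ProjRes K L (D.std i)) (hRi : Ri.Minimal dL)
    (Rj : ProjRes K L (D.std j)) (hRj : Rj.Minimal dL)
    (Rl : ProjRes K L (D.std l)) (hRl : Rl.Minimal dL)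
    -- a homomorphism `f' : Δ_Λ(i) → Δ_Λ(j)` together with a chain-map lift `g`
    (f' : D.std i →ₗ[L] D.std j)
    (g : ∀ t, Ri.P t →ₗ[L] Rj.P t)
    (hg_aug : Rj.aug.comp (g 0) = f'.comp Ri.aug)
    (hg_chain : ∀ t, (g t).comp (Ri.d t) = (Rj.d t).comp (g (t + 1)))
    -- a degree-`k = k' + 1` chain map `ε` representing a class of `Ext^k(Δ_Λ(j), Δ_Λ(ℓ))`
    (ε : ∀ t, Rj.P (k' + 1 + t) →ₗ[L] Rl.P t)
    (hε_chain : ∀ t, (ε t).comp (Rj.d (k' + 1 + t)) = (Rl.d t).comp (ε (t + 1))) :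
    -- the Yoneda product `[ε] ⋆ [f']` is zero: the composite chain map is null-homotopic
    ∃ (s : ∀ t, Ri.P (k' + 1 + t) →ₗ[L] Rl.P (t + 1)) (s' : Ri.P k' →ₗ[L] Rl.P 0),
      ((ε 0).comp (g (k' + 1 + 0)) = (Rl.d 0).comp (s 0) + s'.comp (Ri.d k')) ∧
      (∀ t, ((ε (t + 1)).comp (g (k' + 1 + t + 1)) :
            Ri.P (k' + 1 + t + 1) →ₗ[L] Rl.P (t + 1)) =
        ((Rl.d (t + 1)).comp (s (t + 1)) : Ri.P (k' + 1 + t + 1) →ₗ[L] Rl.P (t + 1)) +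
          (s t).comp (Ri.d (k' + 1 + t))) := by
  classical
  set eBi := D.ιB (dB.e i) with heBi
  set eBj := D.ιB (dB.e j) with heBj
  -- radical facts
  have hrad_abB : ∀ (a b : Fin n), a ≠ b → ∀ x : B, dB.IsRad (dB.e a * x * dB.e b) := by
    intro a b hab x m
    have h1 : dB.e m * (dB.e a * x * dB.e b) * dB.e m
        = (dB.e m * dB.e a) * x * (dB.e b * dB.e m) := by
      simp only [mul_assoc]
    rw [h1, dB.orth, dB.orth]
    split_ifs with h2 h3
    · exact absurd (h3.trans h2).symm hab
    · simp
    · simp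
    · simp
  have hrad_abC : ∀ (a b : Fin n), a ≠ b → ∀ x : C, dC.IsRad (dC.e a * x * dC.e b) := by
    intro a b hab x m
    have h1 : dC.e m * (dC.e a * x * dC.e b) * dC.e m
        = (dC.e m * dC.e a) * x * (dC.e b * dC.e m) := by
      simp only [mul_assoc]
    rw [h1, dC.orth, dC.orth]
    split_ifs with h2 h3
    · exact absurd (h3.trans h2).symm hab
    · simp
    · simp
    · simp
  have hrad_mul_e : ∀ (b : B) (a : Fin n), dB.IsRad b → dB.IsRad (b * dB.e a) := by
    intro b a hb m
    have h1 : dB.e m * (b * dB.e a) * dB.e m = dB.e m * b * (dB.e a * dB.e m) := by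
      simp only [mul_assoc]
    rw [h1, dB.orth]
    split_ifs with h
    · rw [h]; exact hb m
    · rw [mul_zero]
  have heiB : dB.e i * dB.e i = dB.e i := by rw [dB.orth]; simp
  have hejB : dB.e j * dB.e j = dB.e j := by rw [dB.orth]; simp
  have heiC : dC.e i * dC.e i = dC.e i := by rw [dC.orth]; simp
  have hejC : dC.e j * dC.e j = dC.e j := by rw [dC.orth]; simp
  have hei : eBi * eBi = eBi := by rw [heBi, ← map_mul, heiB]
  have hej : eBj * eBj = eBj := by rw [heBj, ← map_mul, hejB]
  -- the span defining the standard module at j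
  set NJ : Submodule L L :=
    Submodule.span L {x : L | ∃ b, dB.IsRad b ∧ x = D.ιB b * D.ιB (dB.e j)} with hNJdef
  -- the decomposition lemma
  have hMsub : ∀ x : L, ∃ c : C, c = dC.e i * c * dC.e j ∧ eBi * x * eBj - D.ιC c ∈ NJ := by
    intro x
    let Msub : Submodule K L :=
      { carrier := {y | ∃ c : C, c = dC.e i * c * dC.e j ∧ y - D.ιC c ∈ NJ}
        add_mem' := by
          rintro y₁ y₂ ⟨c₁, hc₁, hm₁⟩ ⟨c₂, hc₂, hm₂⟩
          refine ⟨c₁ + c₂, by rw [mul_add, add_mul, ← hc₁, ← hc₂], ?_⟩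
          have h : y₁ + y₂ - D.ιC (c₁ + c₂) = (y₁ - D.ιC c₁) + (y₂ - D.ιC c₂) := by
            rw [map_add]; abel
          rw [h]; exact NJ.add_mem hm₁ hm₂
        zero_mem' := ⟨0, by simp, by simp⟩
        smul_mem' := by
          rintro k y ⟨c, hc, hm⟩
          refine ⟨k • c, by rw [mul_smul_comm, smul_mul_assoc, ← hc], ?_⟩
          have h : k • y - D.ιC (k • c) = k • (y - D.ιC c) := by rw [map_smul, smul_sub]
          rw [h, ← algebraMap_smul L k (y - D.ιC c)]
          exact NJ.smul_mem _ hm }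
    let ℓ : L →ₗ[K] L :=
      { toFun := fun y => eBi * y * eBj
        map_add' := by
          intro a b
          show eBi * (a + b) * eBj = eBi * a * eBj + eBi * b * eBj
          rw [mul_add, add_mul]
        map_smul' := by
          intro k a
          show eBi * (k • a) * eBj = k • (eBi * a * eBj)
          rw [mul_smul_comm, smul_mul_assoc] }
    have hgen : {y : L | ∃ c b, y = D.ιC c * D.ιB b} ⊆ (Msub.comap ℓ : Set L) := by
      rintro y ⟨c₀, b₀, rfl⟩
      show eBi * (D.ιC c₀ * D.ιB b₀) * eBj ∈ Msub
      have hL1 : eBi * (D.ιC c₀ * D.ιB b₀) * eBj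
          = D.ιC (dC.e i * c₀) * D.ιB (b₀ * dB.e j) := by
        rw [heBi, heBj, D.idem i, ← mul_assoc, ← map_mul, mul_assoc, ← map_mul]
      have hsum : ∑ a, dB.e a * b₀ * dB.e j = b₀ * dB.e j := by
        rw [← Finset.sum_mul, ← Finset.sum_mul, dB.complete, one_mul]
      have hrw : eBi * (D.ιC c₀ * D.ιB b₀) * eBj
          = ∑ a, D.ιC (dC.e i * c₀) * D.ιB (dB.e a * b₀ * dB.e j) := by
        rw [hL1, ← hsum, map_sum, Finset.mul_sum]
      rw [hrw]
      refine Submodule.sum_mem _ ?_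
      intro a _
      rcases eq_or_ne a j with haj | haj
      · -- diagonal term: lands in the image of ιC
        subst haj
        obtain ⟨κ, hκ⟩ := hB.2.2 a b₀
        refine ⟨κ • (dC.e i * c₀ * dC.e a), ?_, ?_⟩
        · rw [mul_smul_comm, smul_mul_assoc]
          congr 1
          have h5 : dC.e i * (dC.e i * c₀ * dC.e a) * dC.e a
              = (dC.e i * dC.e i) * (c₀ * (dC.e a * dC.e a)) := by simp only [mul_assoc]
          rw [h5, heiC, hejC, ← mul_assoc]
        · have h6 : dB.e a * b₀ * dB.e a = κ • dB.e a := hκ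
          have h7 : D.ιC (dC.e i * c₀) * D.ιB (dB.e a * b₀ * dB.e a)
              = D.ιC (κ • (dC.e i * c₀ * dC.e a)) := by
            rw [h6, map_smul, mul_smul_comm, D.idem a, ← map_mul, ← map_smul]
          rw [h7, sub_self]
          exact NJ.zero_mem
      · -- off-diagonal term: lands in NJ
        refine ⟨0, by simp, ?_⟩
        rw [map_zero, sub_zero]
        have hb' : dB.IsRad (dB.e a * b₀ * dB.e j) := hrad_abB a j haj b₀
        have hmem : D.ιB (dB.e a * b₀ * dB.e j) * D.ιB (dB.e j)
            ∈ {x : L | ∃ b, dB.IsRad b ∧ x = D.ιB b * D.ιB (dB.e j)} := ⟨_, hb', rfl⟩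
        have hX : D.ιB (dB.e a * b₀ * dB.e j) * D.ιB (dB.e j) = D.ιB (dB.e a * b₀ * dB.e j) := by
          rw [← map_mul]
          congr 1
          have h8 : dB.e a * b₀ * dB.e j * dB.e j = dB.e a * (b₀ * (dB.e j * dB.e j)) := by
            simp only [mul_assoc]
          rw [h8, hejB, ← mul_assoc]
        have h3 : D.ιC (dC.e i * c₀) * D.ιB (dB.e a * b₀ * dB.e j)
            = D.ιC (dC.e i * c₀) • (D.ιB (dB.e a * b₀ * dB.e j) * D.ιB (dB.e j)) := by
          rw [smul_eq_mul, hX]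
        rw [h3]
        exact NJ.smul_mem _ (Submodule.subset_span hmem)
    have hx : x ∈ Submodule.span K {y : L | ∃ c b, y = D.ιC c * D.ιB b} := by
      rw [D.spans]; trivial
    exact Submodule.span_le.mpr hgen hx
  -- step 1 : factor f' through Rj.P 0
  have hexv : ∃ v : D.std i →ₗ[L] Rj.P 0, Rj.aug.comp v = f' := by
    set Qi : Submodule L L := leftIdeal eBi with hQidef
    set Qj : Submodule L L := leftIdeal eBj with hQjdef
    have hεiQ : eBi ∈ Qi := hei
    have hεjQ : eBj ∈ Qj := hej
    set NIc : Submodule L Qi :=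
      (Submodule.span L {x : L | ∃ b, dB.IsRad b ∧ x = D.ιB b * D.ιB (dB.e i)}).comap
        Qi.subtype with hNIc
    set NJc : Submodule L Qj := NJ.comap Qj.subtype with hNJc
    have hsmulj : ∀ (r : L) (y : Qj), (Submodule.Quotient.mk (r • y) : D.std j)
        = r • (Submodule.Quotient.mk y : D.std j) := fun r y => rfl
    have hsmuli : ∀ (r : L) (y : Qi), (Submodule.Quotient.mk (r • y) : D.std i)
        = r • (Submodule.Quotient.mk y : D.std i) := fun r y => rfl
    obtain ⟨z0, hz0⟩ := Submodule.Quotient.mk_surjective NJc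
      (f' (Submodule.Quotient.mk ⟨eBi, hεiQ⟩))
    set z : Qj := eBi • z0 with hzdef
    have hmkz : (Submodule.Quotient.mk z : D.std j)
        = f' (Submodule.Quotient.mk ⟨eBi, hεiQ⟩) := by
      have h2 : eBi • (⟨eBi, hεiQ⟩ : Qi) = (⟨eBi, hεiQ⟩ : Qi) := Subtype.ext hei
      calc (id (Submodule.Quotient.mk z) : D.std j)
          = eBi • (id (Submodule.Quotient.mk z0) : D.std j) := hsmulj eBi z0
        _ = eBi • f' (Submodule.Quotient.mk ⟨eBi, hεiQ⟩) := by rw [hz0]; rfl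
        _ = f' (eBi • (Submodule.Quotient.mk ⟨eBi, hεiQ⟩ : D.std i)) := (map_smul f' _ _).symm
        _ = f' (Submodule.Quotient.mk (eBi • (⟨eBi, hεiQ⟩ : Qi))) := by rw [hsmuli]
        _ = f' (Submodule.Quotient.mk ⟨eBi, hεiQ⟩) := by rw [h2]
    have hz1 : eBi * (z : L) = (z : L) := by
      show eBi * (eBi * (z0 : L)) = eBi * (z0 : L)
      rw [← mul_assoc, hei]
    have hz2 : (z : L) * eBj = (z : L) := z.2
    obtain ⟨c, hc, hcm⟩ := hMsub (z : L)
    have hcm' : (z : L) - D.ιC c ∈ NJ := by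
      rwa [mul_assoc, hz2, hz1] at hcm
    have hcrad : dC.IsRad c := by rw [hc]; exact hrad_abC i j hij c
    have hcej : c * dC.e j = c := by
      conv_lhs => rw [hc]
      rw [mul_assoc, mul_assoc, hejC, ← mul_assoc, ← hc]
    have hcQj : D.ιC c * eBj = D.ιC c := by
      rw [heBj, D.idem j, ← map_mul, hcej]
    let HH : Qi →ₗ[L] Qj :=
      { toFun := fun x => ⟨(x : L) * D.ιC c, by
          show (x : L) * D.ιC c * eBj = (x : L) * D.ιC c
          rw [mul_assoc, hcQj]⟩
        map_add' := by
          intro a b; apply Subtype.ext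
          show ((a : L) + b) * D.ιC c = (a : L) * D.ιC c + (b : L) * D.ιC c
          rw [add_mul]
        map_smul' := by
          intro l a; apply Subtype.ext
          show (l * (a : L)) * D.ιC c = l * ((a : L) * D.ιC c)
          rw [mul_assoc] }
    have hkill : NIc ≤ LinearMap.ker HH := by
      intro x hx
      rw [LinearMap.mem_ker]
      apply Subtype.ext
      show (x : L) * D.ιC c = 0
      have hker : Submodule.span L {x : L | ∃ b, dB.IsRad b ∧ x = D.ιB b * D.ιB (dB.e i)}
          ≤ LinearMap.ker (LinearMap.toSpanSingleton L L (D.ιC c)) := by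
        rw [Submodule.span_le]
        rintro y ⟨b, hb, rfl⟩
        rw [SetLike.mem_coe, LinearMap.mem_ker]
        show (D.ιB b * D.ιB (dB.e i)) • D.ιC c = 0
        rw [smul_eq_mul, ← map_mul, D.radMul _ _ (hrad_mul_e b i hb) hcrad]
      have hx' := hker hx
      rw [LinearMap.mem_ker] at hx'
      simpa [LinearMap.toSpanSingleton_apply, smul_eq_mul] using hx'
    let u : D.std i →ₗ[L] Qj := Submodule.liftQ NIc HH hkill
    have hu : ∀ x : Qi, (Submodule.Quotient.mk (HH x) : D.std j)
        = f' (Submodule.Quotient.mk x) := by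
      intro x
      have hxval : x = (x : L) • (⟨eBi, hεiQ⟩ : Qi) := Subtype.ext x.2.symm
      have hfx : f' (Submodule.Quotient.mk x)
          = (Submodule.Quotient.mk ((x : L) • z) : D.std j) := by
        calc f' (Submodule.Quotient.mk x)
            = f' (Submodule.Quotient.mk ((x : L) • (⟨eBi, hεiQ⟩ : Qi))) := by rw [← hxval]
          _ = f' ((x : L) • (Submodule.Quotient.mk ⟨eBi, hεiQ⟩ : D.std i)) := by rw [hsmuli]
          _ = (x : L) • f' (Submodule.Quotient.mk ⟨eBi, hεiQ⟩) := map_smul f' _ _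
          _ = (x : L) • (id (Submodule.Quotient.mk z) : D.std j) := by rw [hmkz]; rfl
          _ = (id (Submodule.Quotient.mk ((x : L) • z)) : D.std j) := (hsmulj _ _).symm
      rw [hfx]
      have hmem : ((HH x - (x : L) • z : Qj) : L) ∈ NJ := by
        have hval : ((HH x - (x : L) • z : Qj) : L) = -((x : L) • ((z : L) - D.ιC c)) := by
          show (x : L) * D.ιC c - (x : L) * (z : L) = -((x : L) • ((z : L) - D.ιC c))
          rw [smul_eq_mul, mul_sub, neg_sub]
        rw [hval]
        exact NJ.neg_mem (NJ.smul_mem _ hcm')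
      exact (Submodule.Quotient.eq NJc).mpr hmem
    obtain ⟨p0, hp0⟩ := Rj.aug_surj (Submodule.Quotient.mk ⟨eBj, hεjQ⟩)
    let w0 : Qj →ₗ[L] Rj.P 0 :=
      { toFun := fun y => (y : L) • p0
        map_add' := by
          intro a b
          show ((a : L) + b) • p0 = (a : L) • p0 + (b : L) • p0
          rw [add_smul]
        map_smul' := by
          intro l a
          show (l * (a : L)) • p0 = l • ((a : L) • p0)
          rw [mul_smul] }
    refine ⟨w0.comp u, ?_⟩
    refine Submodule.linearMap_qext NIc ?_
    refine LinearMap.ext fun x => ?_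
    show Rj.aug (w0 (u (Submodule.Quotient.mk x))) = f' (Submodule.Quotient.mk x)
    have hux : u (Submodule.Quotient.mk x) = HH x := rfl
    calc Rj.aug (w0 (u (Submodule.Quotient.mk x)))
        = Rj.aug (w0 (HH x)) := by rw [hux]
      _ = Rj.aug ((HH x : L) • p0) := rfl
      _ = (HH x : L) • Rj.aug p0 := map_smul _ _ _
      _ = (HH x : L) • (id (Submodule.Quotient.mk ⟨eBj, hεjQ⟩) : D.std j) := by rw [hp0]; rfl
      _ = (id (Submodule.Quotient.mk ((HH x : L) • (⟨eBj, hεjQ⟩ : Qj))) : D.std j) :=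
          (hsmulj _ _).symm
      _ = (id (Submodule.Quotient.mk (HH x)) : D.std j) := by
          exact congrArg (fun y : Qj => (id (Submodule.Quotient.mk y) : D.std j)) (Subtype.ext (HH x).2)
      _ = f' (Submodule.Quotient.mk x) := hu x
  obtain ⟨v, hv⟩ := hexv
  -- step 2 : null homotopy
  set Gm : ∀ t, Ri.P t →ₗ[L] Rj.P t :=
    fun t => Nat.casesOn t (g 0 - v.comp Ri.aug) (fun t' => g (t' + 1)) with hGm
  have haugd0 : Ri.aug.comp (Ri.d 0) = 0 := by
    ext x
    have hx : Ri.d 0 x ∈ LinearMap.range (Ri.d 0) := ⟨x, rfl⟩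
    rw [← Ri.exact0] at hx
    simpa using hx
  have hG0 : Rj.aug.comp (Gm 0) = 0 := by
    show Rj.aug.comp (g 0 - v.comp Ri.aug) = 0
    rw [LinearMap.comp_sub, hg_aug, ← LinearMap.comp_assoc, hv, sub_self]
  have hGc : ∀ t, (Gm t).comp (Ri.d t) = (Rj.d t).comp (Gm (t + 1)) := by
    intro t
    cases t with
    | zero =>
      show (g 0 - v.comp Ri.aug).comp (Ri.d 0) = (Rj.d 0).comp (g 1)
      rw [LinearMap.sub_comp, LinearMap.comp_assoc, haugd0, LinearMap.comp_zero, sub_zero]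
      exact hg_chain 0
    | succ t' =>
      exact hg_chain (t' + 1)
  obtain ⟨h, hh0, hht⟩ := nullHomotopy Ri Rj Gm hG0 hGc
  have hgeq : ∀ m, g (m + 1) = (Rj.d (m + 1)).comp (h (m + 1)) + (h m).comp (Ri.d m) := by
    intro m
    have hm := hht m
    have h2 : Gm (m + 1) = g (m + 1) := rfl
    rw [h2, eq_sub_iff_add_eq] at hm
    rw [← hm]
  refine ⟨fun t => (ε (t + 1)).comp (h (k' + 1 + t)), (ε 0).comp (h k'), ?_, ?_⟩
  · refine LinearMap.ext fun x => ?_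
    have e1 := LinearMap.congr_fun (hgeq k') x
    have e2 := LinearMap.congr_fun (hε_chain 0) ((h (k' + 1)) x)
    have e3 : (ε 0) ((g (k' + 1)) x)
        = (ε 0) ((Rj.d (k' + 1)) ((h (k' + 1)) x)) + (ε 0) ((h k') ((Ri.d k') x)) :=
      (congrArg _ e1).trans (map_add _ _ _)
    exact e3.trans (congrArg₂ (· + ·) e2 rfl)
  · intro t
    refine LinearMap.ext fun x => ?_
    have e1 := LinearMap.congr_fun (hgeq (k' + 1 + t)) x
    have e2 := LinearMap.congr_fun (hε_chain (t + 1)) ((h (k' + 1 + t + 1)) x)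
    have e3 : (ε (t + 1)) ((g (k' + 1 + t + 1)) x)
        = (ε (t + 1)) ((Rj.d (k' + 1 + t + 1)) ((h (k' + 1 + t + 1)) x))
          + (ε (t + 1)) ((h (k' + 1 + t)) ((Ri.d (k' + 1 + t)) x)) :=
      (congrArg _ e1).trans (map_add _ _ _)
    exact e3.trans (congrArg₂ (· + ·) e2 rfl)
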